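/- Let θ₀ ∈ ℝ with sin θ₀ ≠ 0 and let β ∈ ℝ. Define v(r) = (r·cos θ₀ + (r^2+β)^{1/2})/sin θ₀ for those r > 0 with r^2 + β > 0. Then v is differentiable there with v'(r) = (cos θ₀ + r/(r^2+β)^{1/2})/sin θ₀, and v satisfies the radial special Lagrangian equation with constant phase θ₀ in dimension 2, in the form (1 − v(r)·v'(r)/r)·sin θ₀ + (v'(r) + v(r)/r)·cos θ₀ = 0 for all such r. (This gives the explicit family of all radial special Lagrangian solutions u with u' = v in dimension 2.) -/

import Mathlib

/-- (Explicit radial special Lagrangian solutions in dimension 2,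
Remark after Proposition `prop1` of Chen–Warren.)
For `sin θ₀ ≠ 0` and `β ∈ ℝ`, the function `v(r) = (r cos θ₀ + √(r²+β))/sin θ₀`,
defined for `r > 0` with `r² + β > 0`, is differentiable with
`v'(r) = (cos θ₀ + r/√(r²+β))/sin θ₀` and satisfies the radial special Lagrangian
equation with constant phase `θ₀`:
`(1 − v v'/r) sin θ₀ + (v' + v/r) cos θ₀ = 0`. -/
theorem explicit_radial_special_lagrangian_dim_two
    (θ₀ β : ℝ) (hθ : Real.sin θ₀ ≠ 0)
    (v : ℝ → ℝ)
    (hv : v = fun r => (r * Real.cos θ₀ + Real.sqrt (r ^ 2 + β)) / Real.sin θ₀) :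
    ∀ r : ℝ, 0 < r → 0 < r ^ 2 + β →
      HasDerivAt v ((Real.cos θ₀ + r / Real.sqrt (r ^ 2 + β)) / Real.sin θ₀) r ∧
      (1 - v r * ((Real.cos θ₀ + r / Real.sqrt (r ^ 2 + β)) / Real.sin θ₀) / r)
          * Real.sin θ₀
        + ((Real.cos θ₀ + r / Real.sqrt (r ^ 2 + β)) / Real.sin θ₀ + v r / r)
          * Real.cos θ₀ = 0 := by
  intro r hr hβ
  have hs : 0 < Real.sqrt (r ^ 2 + β) := Real.sqrt_pos.2 hβ
  have hs' : Real.sqrt (r ^ 2 + β) ≠ 0 := ne_of_gt hs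
  have hsq : Real.sqrt (r ^ 2 + β) ^ 2 = r ^ 2 + β := Real.sq_sqrt hβ.le
  constructor
  · have h1 : HasDerivAt (fun x : ℝ => x ^ 2 + β) (2 * r) r := by
      simpa using ((hasDerivAt_pow 2 r).add_const β)
    have h2 : HasDerivAt (fun x : ℝ => Real.sqrt (x ^ 2 + β))
        (1 / (2 * Real.sqrt (r ^ 2 + β)) * (2 * r)) r :=
      (Real.hasDerivAt_sqrt hβ.ne').comp r h1
    have h3 : HasDerivAt (fun x : ℝ => x * Real.cos θ₀ + Real.sqrt (x ^ 2 + β))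
        (Real.cos θ₀ + 1 / (2 * Real.sqrt (r ^ 2 + β)) * (2 * r)) r :=
      by
        have h4 := ((hasDerivAt_id' r).mul_const (Real.cos θ₀)).add h2
        rw [one_mul] at h4
        exact h4
    have := h3.div_const (Real.sin θ₀)
    rw [hv]
    refine this.congr_deriv ?_
    field_simp
  · rw [hv]
    simp only
    field_simp
    linear_combination (r * Real.sqrt (r ^ 2 + β)) * Real.sin_sq_add_cos_sq θ₀
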